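/- Let m' > m ≥ 1 be integers, v ∈ [0,1], and suppose v ∈ (i/m, (i+1)/m]. Let v' be the element of {0, 1/m', ..., 1} lying in (i/m, (i+1)/m] that is closest to v. Then for every p̂ ∈ {0, 1/m, ..., 1} and y ∈ {0,1}, |ℓ_v(y, p̂) − ℓ_{v'}(y, p̂)| ≤ 1/m', where ℓ_v(y, q) = (v − y)·sign(q − v). -/

import Mathlib

/-- `sign(x) = 1` if `x ≥ 0` and `-1` otherwise. -/
noncomputable def sgn (x : ℝ) : ℝ := if 0 ≤ x then 1 else -1

/-- The loss `ℓ_v(y, q) = (v - y) · sign(q - v)`. -/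
noncomputable def lossV (v y q : ℝ) : ℝ := (v - y) * sgn (q - v)

/-- If `v ∈ (i/m, (i+1)/m]` and `v'` is the closest point of the `1/m'`-grid lying in the same
interval, then `|ℓ_v(y,p̂) − ℓ_{v'}(y,p̂)| ≤ 1/m'` for every grid forecast `p̂` and `y ∈ {0,1}`. -/
theorem lossV_discretization (m m' : ℕ) (hm : 1 ≤ m) (hmm : m < m') (v v' : ℝ) (i : ℕ)
    (hv : v ∈ Set.Icc (0:ℝ) 1)
    (hvI : v ∈ Set.Ioc ((i : ℝ) / m) (((i : ℝ) + 1) / m))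
    (hv'grid : ∃ j : ℕ, j ≤ m' ∧ v' = (j : ℝ) / m')
    (hv'I : v' ∈ Set.Ioc ((i : ℝ) / m) (((i : ℝ) + 1) / m))
    (hclosest : ∀ j : ℕ, j ≤ m' → (j : ℝ) / m' ∈ Set.Ioc ((i : ℝ) / m) (((i : ℝ) + 1) / m) →
      |v - v'| ≤ |v - (j : ℝ) / m'|) :
    ∀ k : ℕ, k ≤ m → ∀ y : ℝ, (y = 0 ∨ y = 1) →
      |lossV v y ((k : ℝ) / m) - lossV v' y ((k : ℝ) / m)| ≤ 1 / m' := by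
  intro k hk y hy
  have hm0 : (0:ℝ) < m := by exact_mod_cast Nat.lt_of_lt_of_le Nat.zero_lt_one hm
  have hm'0 : (0:ℝ) < m' := by
    have : 0 < m' := lt_trans (Nat.lt_of_lt_of_le Nat.zero_lt_one hm) hmm
    exact_mod_cast this
  have hv0 : (0:ℝ) ≤ v := hv.1
  have hv1 : v ≤ 1 := hv.2
  obtain ⟨hlo, hhi⟩ := hvI
  obtain ⟨hlo', hhi'⟩ := hv'I
  -- Step 1: |v - v'| ≤ 1/m'
  have hvv' : |v - v'| ≤ 1 / m' := by
    set c : ℤ := ⌈(m':ℝ) * v⌉ with hc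
    have hcle : (m':ℝ) * v ≤ c := Int.le_ceil _
    have hclt : (c:ℝ) < (m':ℝ) * v + 1 := Int.ceil_lt_add_one _
    have hc0 : 0 ≤ c := Int.ceil_nonneg (by positivity)
    have hcm' : c ≤ (m' : ℤ) := by
      have : (m':ℝ) * v ≤ (m' : ℤ) := by
        calc (m':ℝ) * v ≤ (m':ℝ) * 1 := by nlinarith
        _ = ((m':ℤ) : ℝ) := by push_cast; ring
      exact Int.ceil_le.mpr this
    by_cases hcase : ((c:ℝ)) / m' ≤ ((i : ℝ) + 1) / m
    · -- use the ceiling grid point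
      have hjm : c.toNat ≤ m' := by omega
      have hcast : ((c.toNat : ℕ) : ℝ) = (c : ℝ) := by
        exact_mod_cast Int.toNat_of_nonneg hc0
      have hvle : v ≤ (c:ℝ) / m' := by
        rw [le_div_iff₀ hm'0]; linarith [hcle]
      have hmem : ((c.toNat : ℕ) : ℝ) / m' ∈ Set.Ioc ((i : ℝ) / m) (((i : ℝ) + 1) / m) := by
        rw [hcast]
        exact ⟨lt_of_lt_of_le hlo hvle, hcase⟩
      have h1 := hclosest c.toNat hjm hmem
      rw [hcast] at h1
      have h2 : |v - (c:ℝ) / m'| ≤ 1 / m' := by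
        rw [abs_le]
        constructor
        · have : (c:ℝ) / m' < v + 1 / m' := by
            have hx : (v + 1/(m':ℝ)) * m' = (m':ℝ)*v + 1 := by field_simp
            rw [div_lt_iff₀ hm'0]; linarith
          linarith
        · linarith [hvle, le_of_lt (by positivity : (0:ℝ) < 1 / m')]
      linarith [h1, h2]
    · -- use the floor grid point
      push_neg at hcase
      set f : ℤ := ⌊(m':ℝ) * v⌋ with hf
      have hfle : (f:ℝ) ≤ (m':ℝ) * v := Int.floor_le _
      have hflt : (m':ℝ) * v - 1 < (f:ℝ) := by
        have := Int.sub_one_lt_floor ((m':ℝ) * v)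
        linarith
      have hf0 : 0 ≤ f := Int.floor_nonneg.mpr (by positivity)
      have hfm' : f ≤ (m' : ℤ) := by
        have hcf : f ≤ c := Int.floor_le_ceil _
        omega
      have hcf : (c:ℝ) ≤ (f:ℝ) + 1 := by
        have : c ≤ f + 1 := Int.ceil_le_floor_add_one _
        exact_mod_cast this
      have hcast : ((f.toNat : ℕ) : ℝ) = (f : ℝ) := by
        exact_mod_cast Int.toNat_of_nonneg hf0
      have hfv : (f:ℝ) / m' ≤ v := by
        rw [div_le_iff₀ hm'0]; linarith
      have hmminv : 1 / (m':ℝ) < 1 / m := by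
        apply one_div_lt_one_div_of_lt hm0
        exact_mod_cast hmm
      have hflo : (i:ℝ) / m < (f:ℝ) / m' := by
        have h1 : ((i:ℝ) + 1) / m < (c:ℝ) / m' := hcase
        have h2 : ((i:ℝ) + 1) / m = (i:ℝ)/m + 1/m := by ring
        have h3 : (c:ℝ) / m' ≤ (f:ℝ)/m' + 1/m' := by
          rw [← add_div]
          exact div_le_div_of_nonneg_right hcf hm'0.le |>.trans_eq rfl
        linarith
      have hmem : ((f.toNat : ℕ) : ℝ) / m' ∈ Set.Ioc ((i : ℝ) / m) (((i : ℝ) + 1) / m) := by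
        rw [hcast]
        exact ⟨hflo, le_trans hfv hhi⟩
      have h1 := hclosest f.toNat (by omega) hmem
      rw [hcast] at h1
      have h2 : |v - (f:ℝ) / m'| ≤ 1 / m' := by
        rw [abs_le]
        constructor
        · linarith [hfv, le_of_lt (by positivity : (0:ℝ) < 1 / m')]
        · have : v - 1/m' < (f:ℝ)/m' := by
            have hx : (v - 1/(m':ℝ)) * m' = (m':ℝ)*v - 1 := by field_simp
            rw [lt_div_iff₀ hm'0]; linarith
          linarith
      linarith [h1, h2]
  -- Step 2: the signs agree
  have hsgn : sgn ((k : ℝ) / m - v) = sgn ((k : ℝ) / m - v') := by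
    rcases le_or_gt (i + 1) k with h | h
    · have hk1 : ((i:ℝ) + 1) / m ≤ (k:ℝ) / m := by
        apply div_le_div_of_nonneg_right ?_ hm0.le |>.trans_eq rfl
        exact_mod_cast h
      have h1 : (0:ℝ) ≤ (k:ℝ)/m - v := by linarith
      have h2 : (0:ℝ) ≤ (k:ℝ)/m - v' := by linarith
      simp [sgn, h1, h2]
    · have hki : k ≤ i := by omega
      have hk1 : (k:ℝ) / m ≤ (i:ℝ) / m := by
        apply div_le_div_of_nonneg_right ?_ hm0.le |>.trans_eq rfl
        exact_mod_cast hki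
      have h1 : ¬ (0:ℝ) ≤ (k:ℝ)/m - v := by push_neg; linarith
      have h2 : ¬ (0:ℝ) ≤ (k:ℝ)/m - v' := by push_neg; linarith
      simp [sgn, h1, h2]
  -- Step 3: conclude
  have habs : |sgn ((k : ℝ) / m - v')| = 1 := by
    unfold sgn; split <;> simp
  unfold lossV
  rw [hsgn]
  have : (v - y) * sgn ((k : ℝ) / m - v') - (v' - y) * sgn ((k : ℝ) / m - v')
      = (v - v') * sgn ((k : ℝ) / m - v') := by ring
  rw [this, abs_mul, habs, mul_one]
  exact hvv'
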